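/- Under the same hypotheses (α₁, α₂, α₃ distinct roots of α³ + aα² − 𝔅α + c₁ℭ = 0, each ≠ c₁, β_j = c₂α_j/(α_j − c₁), γ_j² the stated rational expressions), one has γ₁²α₁β₁ + γ₂²α₂β₂ + γ₃²α₃β₃ = 0 and γ₁²β₁² + γ₂²β₂² + γ₃²β₃² = 1. -/

import Mathlib

set_option maxHeartbeats 1000000 in
theorem gamma_sq_beta_identities (a b c₁ c₂ B C α₁ α₂ α₃ β₁ β₂ β₃ γ₁sq γ₂sq γ₃sq : ℝ)
    (hB : B = 2*c₁*a + 3*c₁^2 + c₂*b + 3*c₂^2)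
    (hC : C = a*c₁ + b*c₂ + 2*c₁^2 + 2*c₂^2)
    (hCne : C ≠ 0)
    (h12 : α₁ ≠ α₂) (h13 : α₁ ≠ α₃) (h23 : α₂ ≠ α₃)
    (hc1 : α₁ ≠ c₁) (hc2 : α₂ ≠ c₁) (hc3 : α₃ ≠ c₁)
    (hr1 : α₁^3 + a*α₁^2 - B*α₁ + c₁*C = 0)
    (hr2 : α₂^3 + a*α₂^2 - B*α₂ + c₁*C = 0)
    (hr3 : α₃^3 + a*α₃^2 - B*α₃ + c₁*C = 0)
    (hβ1 : β₁ = c₂*α₁/(α₁ - c₁)) (hβ2 : β₂ = c₂*α₂/(α₂ - c₁)) (hβ3 : β₃ = c₂*α₃/(α₃ - c₁))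
    (hγ1 : γ₁sq = (C + α₂*α₃)/(C*(α₁-α₂)*(α₁-α₃)))
    (hγ2 : γ₂sq = (C + α₁*α₃)/(C*(α₂-α₁)*(α₂-α₃)))
    (hγ3 : γ₃sq = (C + α₁*α₂)/(C*(α₃-α₁)*(α₃-α₂))) :
    γ₁sq*α₁*β₁ + γ₂sq*α₂*β₂ + γ₃sq*α₃*β₃ = 0 ∧
    γ₁sq*β₁^2 + γ₂sq*β₂^2 + γ₃sq*β₃^2 = 1 := by
  have d12 : α₁ - α₂ ≠ 0 := sub_ne_zero.mpr h12
  have d13 : α₁ - α₃ ≠ 0 := sub_ne_zero.mpr h13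
  have d23 : α₂ - α₃ ≠ 0 := sub_ne_zero.mpr h23
  have e1 : α₁ - c₁ ≠ 0 := sub_ne_zero.mpr hc1
  have e2 : α₂ - c₁ ≠ 0 := sub_ne_zero.mpr hc2
  have e3 : α₃ - c₁ ≠ 0 := sub_ne_zero.mpr hc3
  have d21 : α₂ - α₁ ≠ 0 := sub_ne_zero.mpr (Ne.symm h12)
  have d31 : α₃ - α₁ ≠ 0 := sub_ne_zero.mpr (Ne.symm h13)
  have d32 : α₃ - α₂ ≠ 0 := sub_ne_zero.mpr (Ne.symm h23)
  -- symmetric function identities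
  have hA12 : α₁^2 + α₁*α₂ + α₂^2 + a*(α₁+α₂) - B = 0 := by
    apply mul_left_cancel₀ d12
    linear_combination hr1 - hr2
  have hA13 : α₁^2 + α₁*α₃ + α₃^2 + a*(α₁+α₃) - B = 0 := by
    apply mul_left_cancel₀ d13
    linear_combination hr1 - hr3
  have ha : a = -(α₁ + α₂ + α₃) := by
    have h := mul_left_cancel₀ d23
      (show (α₂-α₃)*(α₁+α₂+α₃+a) = (α₂-α₃)*0 by linear_combination hA12 - hA13)
    linarith
  have hBe : B = -(α₁*α₂ + α₁*α₃ + α₂*α₃) := by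
    linear_combination -hA12 + (α₁+α₂)*ha
  have he3 : c₁*C = -(α₁*α₂*α₃) := by
    linear_combination hr1 - α₁^2*ha + α₁*hBe
  have hc2sq : c₂^2 = -(α₁*α₂ + α₁*α₃ + α₂*α₃) - C + c₁*(α₁+α₂+α₃) - c₁^2 := by
    linear_combination hC - hB + hBe - c₁*ha
  constructor
  · -- first identity
    have key : (C + α₂*α₃)*c₂*α₁^2*((α₂-α₃)*(α₂-c₁)*(α₃-c₁))
         - (C + α₁*α₃)*c₂*α₂^2*((α₁-α₃)*(α₁-c₁)*(α₃-c₁))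
         + (C + α₁*α₂)*c₂*α₃^2*((α₁-α₂)*(α₁-c₁)*(α₂-c₁)) = 0 := by
      linear_combination (-c₂*c₁*α₂*α₃^2 + c₂*c₁*α₂^2*α₃ + c₂*c₁*α₁*α₃^2
        - c₂*c₁*α₁*α₂^2 - c₂*c₁*α₁^2*α₃ + c₂*c₁*α₁^2*α₂) * he3
    rw [hβ1, hβ2, hβ3, hγ1, hγ2, hγ3]
    set D : ℝ := C*(α₁-α₂)*(α₁-α₃)*(α₂-α₃)*(α₁-c₁)*(α₂-c₁)*(α₃-c₁) with hDdef
    have hD : D ≠ 0 := by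
      rw [hDdef]; repeat' apply mul_ne_zero
      all_goals assumption
    have t1 : (C + α₂*α₃)/(C*(α₁-α₂)*(α₁-α₃))*α₁*(c₂*α₁/(α₁ - c₁))
        = (C + α₂*α₃)*c₂*α₁^2*((α₂-α₃)*(α₂-c₁)*(α₃-c₁)) / D := by
      rw [div_mul_eq_mul_div, div_mul_div_comm,
        div_eq_div_iff (mul_ne_zero (mul_ne_zero (mul_ne_zero hCne d12) d13) e1) hD, hDdef]
      ring
    have t2 : (C + α₁*α₃)/(C*(α₂-α₁)*(α₂-α₃))*α₂*(c₂*α₂/(α₂ - c₁))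
        = -((C + α₁*α₃)*c₂*α₂^2*((α₁-α₃)*(α₁-c₁)*(α₃-c₁))) / D := by
      rw [div_mul_eq_mul_div, div_mul_div_comm,
        div_eq_div_iff (mul_ne_zero (mul_ne_zero (mul_ne_zero hCne d21) d23) e2) hD, hDdef]
      ring
    have t3 : (C + α₁*α₂)/(C*(α₃-α₁)*(α₃-α₂))*α₃*(c₂*α₃/(α₃ - c₁))
        = (C + α₁*α₂)*c₂*α₃^2*((α₁-α₂)*(α₁-c₁)*(α₂-c₁)) / D := by
      rw [div_mul_eq_mul_div, div_mul_div_comm,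
        div_eq_div_iff (mul_ne_zero (mul_ne_zero (mul_ne_zero hCne d31) d32) e3) hD, hDdef]
      ring
    rw [t1, t2, t3, ← add_div, ← add_div, div_eq_zero_iff]
    left; linarith [key]
  · -- second identity
    have e1' : (α₁ - c₁)^2 ≠ 0 := pow_ne_zero 2 e1
    have e2' : (α₂ - c₁)^2 ≠ 0 := pow_ne_zero 2 e2
    have e3' : (α₃ - c₁)^2 ≠ 0 := pow_ne_zero 2 e3
    have key : (C + α₂*α₃)*c₂^2*α₁^2*((α₂-α₃)*(α₂-c₁)^2*(α₃-c₁)^2)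
         - (C + α₁*α₃)*c₂^2*α₂^2*((α₁-α₃)*(α₁-c₁)^2*(α₃-c₁)^2)
         + (C + α₁*α₂)*c₂^2*α₃^2*((α₁-α₂)*(α₁-c₁)^2*(α₂-c₁)^2)
         = C*(α₁-α₂)*(α₁-α₃)*(α₂-α₃)*(α₁-c₁)^2*(α₂-c₁)^2*(α₃-c₁)^2 := by
      linear_combination ((-1)*α₁^2*α₂^3*α₃^4 + (1)*α₁^2*α₂^4*α₃^3 + (1)*α₁^3*α₂^2*α₃^4 + (-1)*α₁^3*α₂^4*α₃^2 + (-1)*α₁^4*α₂^2*α₃^3 + (1)*α₁^4*α₂^3*α₃^2 + (1)*c₁^2*α₁*α₂^2*α₃^4 + (-1)*c₁^2*α₁*α₂^4*α₃^2 + (-1)*c₁^2*α₁^2*α₂*α₃^4 + (1)*c₁^2*α₁^2*α₂^4*α₃ + (1)*c₁^2*α₁^4*α₂*α₃^2 + (-1)*c₁^2*α₁^4*α₂^2*α₃ + (-2)*c₁^3*α₁*α₂^2*α₃^3 + (2)*c₁^3*α₁*α₂^3*α₃^2 + (2)*c₁^3*α₁^2*α₂*α₃^3 + (-2)*c₁^3*α₁^2*α₂^3*α₃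 + (-2)*c₁^3*α₁^3*α₂*α₃^2 + (2)*c₁^3*α₁^3*α₂^2*α₃ + (-2)*C*c₁*α₁*α₂^2*α₃^3 + (2)*C*c₁*α₁*α₂^3*α₃^2 + (2)*C*c₁*α₁^2*α₂*α₃^3 + (-2)*C*c₁*α₁^2*α₂^3*α₃ + (-2)*C*c₁*α₁^3*α₂*α₃^2 + (2)*C*c₁*α₁^3*α₂^2*α₃ + (1)*C*c₁^2*α₂^2*α₃^3 + (-1)*C*c₁^2*α₂^3*α₃^2 + (-1)*C*c₁^2*α₁^2*α₃^3 + (1)*C*c₁^2*α₁^2*α₂^3 + (1)*C*c₁^2*α₁^3*α₃^2 + (-1)*C*c₁^2*α₁^3*α₂^2 + (-1)*C*c₁^4*α₂*α₃^2 + (1)*C*c₁^4*α₂^2*α₃ + (1)*C*c₁^4*α₁*α₃^2 + (-1)*C*c₁^4*α₁*α₂^2 + (-1)*C*c₁^4*α₁^2*α₃ + (1)*C*c₁^4*α₁^2*α₂) * hc2sq + ((1)*α₁*α₂^3*α₃^4 + (-1)*α₁*α₂^4*α₃^3 + (-1)*α₁^3*α₂*α₃^4 + (1)*α₁^3*α₂^4*α₃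 + (1)*α₁^4*α₂*α₃^3 + (-1)*α₁^4*α₂^3*α₃ + (-1)*c₁*α₁*α₂^2*α₃^4 + (1)*c₁*α₁*α₂^4*α₃^2 + (1)*c₁*α₁^2*α₂*α₃^4 + (-1)*c₁*α₁^2*α₂^4*α₃ + (-1)*c₁*α₁^4*α₂*α₃^2 + (1)*c₁*α₁^4*α₂^2*α₃ + (-1)*c₁^2*α₂^2*α₃^4 + (1)*c₁^2*α₂^4*α₃^2 + (1)*c₁^2*α₁^2*α₃^4 + (-1)*c₁^2*α₁^2*α₂^4 + (-1)*c₁^2*α₁^4*α₃^2 + (1)*c₁^2*α₁^4*α₂^2 + (1)*c₁^3*α₂*α₃^4 + (3)*c₁^3*α₂^2*α₃^3 + (-3)*c₁^3*α₂^3*α₃^2 + (-1)*c₁^3*α₂^4*α₃ + (-1)*c₁^3*α₁*α₃^4 + (1)*c₁^3*α₁*α₂^4 + (-3)*c₁^3*α₁^2*α₃^3 + (3)*c₁^3*α₁^2*α₂^3 + (3)*c₁^3*α₁^3*α₃^2 + (-3)*c₁^3*α₁^3*α₂^2 + (1)*c₁^3*α₁^4*α₃ + (-1)*c₁^3*α₁^4*α₂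 + (-3)*c₁^4*α₂*α₃^3 + (3)*c₁^4*α₂^3*α₃ + (3)*c₁^4*α₁*α₃^3 + (-3)*c₁^4*α₁*α₂^3 + (-3)*c₁^4*α₁^3*α₃ + (3)*c₁^4*α₁^3*α₂ + (2)*c₁^5*α₂*α₃^2 + (-2)*c₁^5*α₂^2*α₃ + (-2)*c₁^5*α₁*α₃^2 + (2)*c₁^5*α₁*α₂^2 + (2)*c₁^5*α₁^2*α₃ + (-2)*c₁^5*α₁^2*α₂ + (2)*C*α₁*α₂^2*α₃^3 + (-2)*C*α₁*α₂^3*α₃^2 + (-2)*C*α₁^2*α₂*α₃^3 + (2)*C*α₁^2*α₂^3*α₃ + (2)*C*α₁^3*α₂*α₃^2 + (-2)*C*α₁^3*α₂^2*α₃ + (-1)*C*c₁*α₂^2*α₃^3 + (1)*C*c₁*α₂^3*α₃^2 + (1)*C*c₁*α₁^2*α₃^3 + (-1)*C*c₁*α₁^2*α₂^3 + (-1)*C*c₁*α₁^3*α₃^2 + (1)*C*c₁*α₁^3*α₂^2 + (1)*C*c₁^3*α₂*α₃^2 + (-1)*C*c₁^3*α₂^2*α₃ + (-1)*C*c₁^3*α₁*α₃^2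 + (1)*C*c₁^3*α₁*α₂^2 + (1)*C*c₁^3*α₁^2*α₃ + (-1)*C*c₁^3*α₁^2*α₂) * he3
    rw [hβ1, hβ2, hβ3, hγ1, hγ2, hγ3]
    set D : ℝ := C*(α₁-α₂)*(α₁-α₃)*(α₂-α₃)*(α₁-c₁)^2*(α₂-c₁)^2*(α₃-c₁)^2 with hDdef
    have hD : D ≠ 0 := by
      rw [hDdef]
      exact mul_ne_zero (mul_ne_zero (mul_ne_zero (mul_ne_zero (mul_ne_zero
        (mul_ne_zero hCne d12) d13) d23) e1') e2') e3'
    have t1 : (C + α₂*α₃)/(C*(α₁-α₂)*(α₁-α₃))*(c₂*α₁/(α₁ - c₁))^2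
        = (C + α₂*α₃)*c₂^2*α₁^2*((α₂-α₃)*(α₂-c₁)^2*(α₃-c₁)^2) / D := by
      rw [div_pow, div_mul_div_comm,
        div_eq_div_iff (mul_ne_zero (mul_ne_zero (mul_ne_zero hCne d12) d13) e1') hD, hDdef]
      ring
    have t2 : (C + α₁*α₃)/(C*(α₂-α₁)*(α₂-α₃))*(c₂*α₂/(α₂ - c₁))^2
        = -((C + α₁*α₃)*c₂^2*α₂^2*((α₁-α₃)*(α₁-c₁)^2*(α₃-c₁)^2)) / D := by
      rw [div_pow, div_mul_div_comm,
        div_eq_div_iff (mul_ne_zero (mul_ne_zero (mul_ne_zero hCne d21) d23) e2') hD, hDdef]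
      ring
    have t3 : (C + α₁*α₂)/(C*(α₃-α₁)*(α₃-α₂))*(c₂*α₃/(α₃ - c₁))^2
        = (C + α₁*α₂)*c₂^2*α₃^2*((α₁-α₂)*(α₁-c₁)^2*(α₂-c₁)^2) / D := by
      rw [div_pow, div_mul_div_comm,
        div_eq_div_iff (mul_ne_zero (mul_ne_zero (mul_ne_zero hCne d31) d32) e3') hD, hDdef]
      ring
    rw [t1, t2, t3, ← add_div, ← add_div, div_eq_one_iff_eq hD]
    linarith [key]
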